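/- Let σ > 0, η > 0, ℓ ≥ 1, n ≥ 2 and let V̂(x̃) for x̃ = (x̃₁,…,x̃ₙ) in the zero-sum hyperplane M_{d,n} ⊂ (ℝ^d)^n be defined by exp(−(2n/σ²) V̂(x̃)) = ∫_{ℝ^d} exp(−(2η/σ²) Σ_{i=1}^n |x̃_i + ζ|^ℓ) dζ. Then for all x̃ ∈ M_{d,n}: (σ²/(2n)) log(n^{d/ℓ}/z(η)) ≤ V̂(x̃) ≤ (2^{ℓ−1}η/n) Σ_{i=1}^n |x̃_i|^ℓ + (σ²/(2n)) log((2^{ℓ−1}n)^{d/ℓ}/z(η)), where z(η) = ∫_{ℝ^d} exp(−(2η/σ²)|x|^ℓ) dx. -/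

import Mathlib

open MeasureTheory

open Real Set

lemma aux_two_conv {a b p : ℝ} (ha : 0 ≤ a) (hb : 0 ≤ b) (hp : 1 ≤ p) :
    (a + b) ^ p ≤ 2 ^ (p - 1) * (a ^ p + b ^ p) := by
  have h := NNReal.coe_le_coe.mpr
    (NNReal.rpow_add_le_mul_rpow_add_rpow a.toNNReal b.toNNReal hp)
  push_cast [Real.coe_toNNReal _ ha, Real.coe_toNNReal _ hb] at h
  convert h using 2

lemma aux_int_1d {b p : ℝ} (hb : 0 < b) (hp : 1 ≤ p) :
    Integrable fun x : ℝ => Real.exp (-b * |x| ^ p) := by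
  have hIoi : IntegrableOn (fun x : ℝ => Real.exp (-b * |x| ^ p)) (Set.Ioi 0) := by
    have h := integrableOn_rpow_mul_exp_neg_mul_rpow (by norm_num : (-1:ℝ) < 0) (zero_lt_one.trans_le hp) hb
    refine h.congr_fun (fun x hx => ?_) measurableSet_Ioi
    dsimp only; rw [Real.rpow_zero, one_mul, abs_of_pos hx]
  have hIic : IntegrableOn (fun x : ℝ => Real.exp (-b * |x| ^ p)) (Set.Iic 0) := by
    rw [← Measure.map_neg_eq_self (volume : Measure ℝ)]
    have m : MeasurableEmbedding fun x : ℝ => -x :=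
      (Homeomorph.neg ℝ).measurableEmbedding
    rw [m.integrableOn_map_iff]
    simp_rw [Function.comp_def, abs_neg, Set.neg_preimage, Set.neg_Iic, neg_zero]
    exact Iff.mpr integrableOn_Ici_iff_integrableOn_Ioi hIoi
  rw [← integrableOn_univ, ← Set.Iic_union_Ioi (a := (0:ℝ))]
  exact hIic.union hIoi

lemma aux_coord_le {d : ℕ} (x : EuclideanSpace ℝ (Fin d)) (i : Fin d) : |x i| ≤ ‖x‖ := by
  rw [EuclideanSpace.norm_eq, ← Real.sqrt_sq_eq_abs (x i)]
  refine Real.sqrt_le_sqrt ?_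
  have := Finset.single_le_sum (f := fun j => ‖x j‖ ^ 2) (fun j _ => sq_nonneg _)
    (Finset.mem_univ i)
  simpa [Real.norm_eq_abs, sq_abs] using this

lemma aux_cont {b p : ℝ} (hp : 1 ≤ p) {E : Type*} [NormedAddCommGroup E] :
    Continuous fun x : E => Real.exp (-b * ‖x‖ ^ p) :=
  Real.continuous_exp.comp (continuous_const.mul
    (continuous_norm.rpow_const fun _ => Or.inr (le_trans zero_le_one hp)))

lemma aux_int_d (d : ℕ) (hd : 1 ≤ d) {b p : ℝ} (hb : 0 < b) (hp : 1 ≤ p) :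
    Integrable fun x : EuclideanSpace ℝ (Fin d) => Real.exp (-b * ‖x‖ ^ p) := by
  have hmp := (EuclideanSpace.volume_preserving_symm_measurableEquiv_toLp (Fin d)).symm
  rw [← hmp.integrable_comp_emb (MeasurableEquiv.measurableEmbedding _)]
  set e := MeasurableEquiv.toLp 2 (Fin d → ℝ)
  have hint : Integrable fun y : Fin d → ℝ => ∏ i, Real.exp (-(b / d) * |y i| ^ p) :=
    Integrable.fintype_prod fun _ => aux_int_1d (by positivity) hp
  refine hint.mono' ?_ ?_
  · exact (((aux_cont hp).measurable).comp e.measurable).aestronglyMeasurable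
  · refine Filter.Eventually.of_forall fun y => ?_
    show |Real.exp (-b * ‖e y‖ ^ p)| ≤ _
    rw [abs_of_pos (Real.exp_pos _), ← Real.exp_sum]
    refine Real.exp_le_exp.mpr ?_
    have hcoord : ∀ i, e y i = y i := fun i => rfl
    have hle : ∀ i : Fin d, |y i| ^ p ≤ ‖e y‖ ^ p := fun i => by
      rw [← hcoord i]
      exact Real.rpow_le_rpow (abs_nonneg _) (aux_coord_le (e y) i)
        (le_trans zero_le_one hp)
    have hsum : ∑ i : Fin d, |y i| ^ p ≤ (d : ℝ) * ‖e y‖ ^ p := by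
      calc ∑ i : Fin d, |y i| ^ p ≤ ∑ _i : Fin d, ‖e y‖ ^ p :=
            Finset.sum_le_sum fun i _ => hle i
        _ = (d : ℝ) * ‖e y‖ ^ p := by simp [Finset.sum_const, mul_comm]
    have hd0 : (0:ℝ) < d := by exact_mod_cast hd
    rw [← Finset.mul_sum]
    have h2 : (b / d) * ∑ i : Fin d, |y i| ^ p ≤ b * ‖e y‖ ^ p := by
      calc (b / d) * ∑ i : Fin d, |y i| ^ p ≤ (b / d) * ((d : ℝ) * ‖e y‖ ^ p) :=
            mul_le_mul_of_nonneg_left hsum (by positivity)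
        _ = b * ‖e y‖ ^ p := by field_simp
    linarith

lemma aux_scale (d : ℕ) {b t p : ℝ} (ht : 0 < t) (hp : 1 ≤ p) :
    ∫ x : EuclideanSpace ℝ (Fin d), Real.exp (-(b * t) * ‖x‖ ^ p)
      = t ^ (-(d : ℝ) / p) * ∫ x : EuclideanSpace ℝ (Fin d), Real.exp (-b * ‖x‖ ^ p) := by
  have hp0 : (0:ℝ) < p := lt_of_lt_of_le zero_lt_one hp
  set R : ℝ := t ^ (-(1 / p)) with hR
  have hR0 : 0 < R := Real.rpow_pos_of_pos ht _
  have key : ∀ x : EuclideanSpace ℝ (Fin d),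
      Real.exp (-b * ‖x‖ ^ p) = Real.exp (-(b * t) * ‖R • x‖ ^ p) := by
    intro x
    rw [norm_smul, Real.norm_eq_abs, abs_of_pos hR0,
      Real.mul_rpow hR0.le (norm_nonneg _), hR, ← Real.rpow_mul ht.le]
    rw [show -(1 / p) * p = -1 by field_simp, Real.rpow_neg_one]
    congr 1
    field_simp
  have h1 := MeasureTheory.Measure.integral_comp_smul
    (volume : Measure (EuclideanSpace ℝ (Fin d)))
    (fun x => Real.exp (-(b * t) * ‖x‖ ^ p)) R
  simp_rw [← key] at h1
  rw [finrank_euclideanSpace_fin] at h1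
  have hRd : R ^ d = t ^ (-(d : ℝ) / p) := by
    rw [hR, ← Real.rpow_natCast (t ^ (-(1 / p))) d, ← Real.rpow_mul ht.le]
    congr 1
    field_simp
  rw [hRd, smul_eq_mul] at h1
  have habs : |(t ^ (-(d : ℝ) / p))⁻¹| = t ^ ((d : ℝ) / p) := by
    rw [← Real.rpow_neg ht.le, abs_of_pos (Real.rpow_pos_of_pos ht _), neg_div, neg_neg]
  rw [habs] at h1
  rw [h1, ← mul_assoc, ← Real.rpow_add ht]
  rw [show -(d : ℝ) / p + (d : ℝ) / p = 0 by ring, Real.rpow_zero, one_mul]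

lemma aux_pos (d : ℕ) (hd : 1 ≤ d) {b p : ℝ} (hb : 0 < b) (hp : 1 ≤ p) :
    0 < ∫ x : EuclideanSpace ℝ (Fin d), Real.exp (-b * ‖x‖ ^ p) := by
  rw [integral_pos_iff_support_of_nonneg_ae
    (Filter.Eventually.of_forall fun x => (Real.exp_pos _).le) (aux_int_d d hd hb hp)]
  have : Function.support (fun x : EuclideanSpace ℝ (Fin d) => Real.exp (-b * ‖x‖ ^ p))
      = Set.univ := Set.eq_univ_of_forall fun x => (Real.exp_pos _).ne'
  rw [this]
  exact isOpen_univ.measure_pos volume Set.univ_nonempty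

/-- Bounds on the effective confining potential `V̂` on the zero-sum hyperplane: if
`exp(−(2n/σ²) V̂(x̃)) = ∫ exp(−(2η/σ²) Σᵢ |x̃ᵢ + ζ|^ℓ) dζ`, then for any zero-sum configuration
`x̃`,
`(σ²/(2n)) log(n^{d/ℓ}/z(η)) ≤ V̂(x̃) ≤ (2^{ℓ−1}η/n) Σᵢ |x̃ᵢ|^ℓ + (σ²/(2n)) log((2^{ℓ−1}n)^{d/ℓ}/z(η))`,
where `z(η) = ∫ exp(−(2η/σ²)|x|^ℓ) dx`. -/
theorem stmt_6 (d n : ℕ) (hd : 1 ≤ d) (hn : 2 ≤ n) (σ η ℓ : ℝ)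
    (hσ : 0 < σ) (hη : 0 < η) (hℓ : 1 ≤ ℓ) (z : ℝ)
    (hz : z = ∫ x : EuclideanSpace ℝ (Fin d), Real.exp (-(2 * η / σ ^ 2) * ‖x‖ ^ ℓ))
    (Vhat : (Fin n → EuclideanSpace ℝ (Fin d)) → ℝ)
    (hV : ∀ xt : Fin n → EuclideanSpace ℝ (Fin d),
      Real.exp (-(2 * n / σ ^ 2) * Vhat xt)
        = ∫ ζ : EuclideanSpace ℝ (Fin d),
            Real.exp (-(2 * η / σ ^ 2) * ∑ i : Fin n, ‖xt i + ζ‖ ^ ℓ))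
    (xt : Fin n → EuclideanSpace ℝ (Fin d)) (hxt : ∑ i : Fin n, xt i = 0) :
    (σ ^ 2 / (2 * n)) * Real.log ((n : ℝ) ^ ((d : ℝ) / ℓ) / z) ≤ Vhat xt ∧
      Vhat xt ≤ (2 ^ (ℓ - 1) * η / n) * ∑ i : Fin n, ‖xt i‖ ^ ℓ
        + (σ ^ 2 / (2 * n)) * Real.log ((2 ^ (ℓ - 1) * (n : ℝ)) ^ ((d : ℝ) / ℓ) / z) := by
  have hℓ0 : (0:ℝ) ≤ ℓ := le_trans zero_le_one hℓ
  have hn0 : (0:ℝ) < n := by positivity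
  have hn1 : (1:ℝ) ≤ n := by exact_mod_cast le_trans (by norm_num) hn
  set c : ℝ := 2 * η / σ ^ 2 with hc_def
  have hc : 0 < c := by positivity
  have h2p : (0:ℝ) < 2 ^ (ℓ - 1) := Real.rpow_pos_of_pos (by norm_num) _
  set S : ℝ := ∑ i : Fin n, ‖xt i‖ ^ ℓ with hS_def
  have hS : 0 ≤ S := Finset.sum_nonneg fun i _ => Real.rpow_nonneg (norm_nonneg _) _
  have hzpos : 0 < z := by rw [hz]; exact aux_pos d hd hc hℓ
  set F : EuclideanSpace ℝ (Fin d) → ℝ :=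
    fun ζ => Real.exp (-c * ∑ i : Fin n, ‖xt i + ζ‖ ^ ℓ) with hF_def
  have hFcont : Continuous F := by
    refine Real.continuous_exp.comp (continuous_const.mul ?_)
    exact continuous_finset_sum _ fun i _ =>
      ((continuous_const.add continuous_id).norm.rpow_const fun _ => Or.inr hℓ0)
  -- Jensen pointwise bound
  have hJ : ∀ ζ : EuclideanSpace ℝ (Fin d),
      (n : ℝ) * ‖ζ‖ ^ ℓ ≤ ∑ i : Fin n, ‖xt i + ζ‖ ^ ℓ := by
    intro ζ
    have hsum_eq : ∑ i : Fin n, (xt i + ζ) = (n : ℝ) • ζ := by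
      rw [Finset.sum_add_distrib, hxt, zero_add, Finset.sum_const, Finset.card_univ,
        Fintype.card_fin, Nat.cast_smul_eq_nsmul]
    have h1 : (n : ℝ) * ‖ζ‖ ≤ ∑ i : Fin n, ‖xt i + ζ‖ := by
      calc (n : ℝ) * ‖ζ‖ = ‖(n : ℝ) • ζ‖ := by
            rw [norm_smul, Real.norm_natCast]
        _ = ‖∑ i : Fin n, (xt i + ζ)‖ := by rw [hsum_eq]
        _ ≤ ∑ i : Fin n, ‖xt i + ζ‖ := norm_sum_le _ _
    have key := Real.rpow_arith_mean_le_arith_mean_rpow Finset.univ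
      (fun _ : Fin n => (n : ℝ)⁻¹) (fun i => ‖xt i + ζ‖)
      (fun i _ => by positivity)
      (by simp [Finset.sum_const, Finset.card_univ]; field_simp)
      (fun i _ => norm_nonneg _) hℓ
    have h2 : ‖ζ‖ ≤ ∑ i : Fin n, (n : ℝ)⁻¹ * ‖xt i + ζ‖ := by
      rw [← Finset.mul_sum]
      rw [show (‖ζ‖ : ℝ) = (n:ℝ)⁻¹ * ((n:ℝ) * ‖ζ‖) by field_simp]
      exact mul_le_mul_of_nonneg_left h1 (by positivity)
    have h3 : ‖ζ‖ ^ ℓ ≤ (n : ℝ)⁻¹ * ∑ i : Fin n, ‖xt i + ζ‖ ^ ℓ := by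
      calc ‖ζ‖ ^ ℓ ≤ (∑ i : Fin n, (n : ℝ)⁻¹ * ‖xt i + ζ‖) ^ ℓ :=
            Real.rpow_le_rpow (norm_nonneg _) h2 hℓ0
        _ ≤ ∑ i : Fin n, (n : ℝ)⁻¹ * ‖xt i + ζ‖ ^ ℓ := key
        _ = (n : ℝ)⁻¹ * ∑ i : Fin n, ‖xt i + ζ‖ ^ ℓ := by rw [Finset.mul_sum]
    calc (n : ℝ) * ‖ζ‖ ^ ℓ ≤ (n : ℝ) * ((n : ℝ)⁻¹ * ∑ i : Fin n, ‖xt i + ζ‖ ^ ℓ) :=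
          mul_le_mul_of_nonneg_left h3 hn0.le
      _ = ∑ i : Fin n, ‖xt i + ζ‖ ^ ℓ := by field_simp
  -- integrability of F
  have hgint : Integrable fun ζ : EuclideanSpace ℝ (Fin d) =>
      Real.exp (-(c * n) * ‖ζ‖ ^ ℓ) := aux_int_d d hd (by positivity) hℓ
  have hFle : ∀ ζ : EuclideanSpace ℝ (Fin d), F ζ ≤ Real.exp (-(c * n) * ‖ζ‖ ^ ℓ) := by
    intro ζ
    refine Real.exp_le_exp.mpr ?_
    have := hJ ζ
    nlinarith [hc]
  have hFint : Integrable F :=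
    hgint.mono' hFcont.aestronglyMeasurable
      (Filter.Eventually.of_forall fun ζ => by
        rw [Real.norm_eq_abs, abs_of_pos (Real.exp_pos _)]; exact hFle ζ)
  -- upper bound on the integral
  have hscale1 : ∫ ζ : EuclideanSpace ℝ (Fin d), Real.exp (-(c * n) * ‖ζ‖ ^ ℓ)
      = (n : ℝ) ^ (-(d : ℝ) / ℓ) * z := by
    rw [hz]; exact aux_scale d hn0 hℓ
  have Iub : ∫ ζ, F ζ ≤ (n : ℝ) ^ (-(d : ℝ) / ℓ) * z :=
    (integral_mono hFint hgint hFle).trans_eq hscale1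
  -- lower bound on the integral
  have hC : ∀ ζ : EuclideanSpace ℝ (Fin d),
      ∑ i : Fin n, ‖xt i + ζ‖ ^ ℓ ≤ 2 ^ (ℓ - 1) * S + 2 ^ (ℓ - 1) * n * ‖ζ‖ ^ ℓ := by
    intro ζ
    have hterm : ∀ i : Fin n, ‖xt i + ζ‖ ^ ℓ ≤ 2 ^ (ℓ - 1) * (‖xt i‖ ^ ℓ + ‖ζ‖ ^ ℓ) :=
      fun i => le_trans (Real.rpow_le_rpow (norm_nonneg _) (norm_add_le _ _) hℓ0)
        (aux_two_conv (norm_nonneg _) (norm_nonneg _) hℓ)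
    calc ∑ i : Fin n, ‖xt i + ζ‖ ^ ℓ
        ≤ ∑ i : Fin n, 2 ^ (ℓ - 1) * (‖xt i‖ ^ ℓ + ‖ζ‖ ^ ℓ) :=
          Finset.sum_le_sum fun i _ => hterm i
      _ = 2 ^ (ℓ - 1) * S + 2 ^ (ℓ - 1) * n * ‖ζ‖ ^ ℓ := by
          simp [Finset.mul_sum, Finset.sum_add_distrib, Finset.sum_const, Finset.card_univ,
            mul_add, hS_def]
          ring
  have hlb : ∀ ζ : EuclideanSpace ℝ (Fin d),
      Real.exp (-(c * 2 ^ (ℓ - 1)) * S) * Real.exp (-(c * 2 ^ (ℓ - 1) * n) * ‖ζ‖ ^ ℓ)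
        ≤ F ζ := by
    intro ζ
    rw [← Real.exp_add]
    refine Real.exp_le_exp.mpr ?_
    have := hC ζ
    nlinarith [hc]
  have hBint : Integrable fun ζ : EuclideanSpace ℝ (Fin d) =>
      Real.exp (-(c * 2 ^ (ℓ - 1)) * S) * Real.exp (-(c * 2 ^ (ℓ - 1) * n) * ‖ζ‖ ^ ℓ) :=
    (aux_int_d d hd (by positivity) hℓ).const_mul _
  have hscale2 : ∫ ζ : EuclideanSpace ℝ (Fin d), Real.exp (-(c * 2 ^ (ℓ - 1) * n) * ‖ζ‖ ^ ℓ)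
      = (2 ^ (ℓ - 1) * (n : ℝ)) ^ (-(d : ℝ) / ℓ) * z := by
    rw [hz]
    have := aux_scale (b := c) (t := 2 ^ (ℓ - 1) * (n : ℝ)) d (by positivity) hℓ
    rw [← this]
    congr 1
    ext ζ
    ring_nf
  have Ilb : Real.exp (-(c * 2 ^ (ℓ - 1)) * S) * ((2 ^ (ℓ - 1) * (n : ℝ)) ^ (-(d : ℝ) / ℓ) * z)
      ≤ ∫ ζ, F ζ := by
    have h := integral_mono hBint hFint hlb
    rwa [integral_const_mul, hscale2] at h
  -- convert to the statement
  constructor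
  · -- lower bound on Vhat
    set L : ℝ := (σ ^ 2 / (2 * n)) * Real.log ((n : ℝ) ^ ((d : ℝ) / ℓ) / z) with hL_def
    have hA : (n : ℝ) ^ (-(d : ℝ) / ℓ) * z = Real.exp (-(2 * n / σ ^ 2) * L) := by
      rw [hL_def, show -(2 * (n : ℝ) / σ ^ 2) * ((σ ^ 2 / (2 * n)) *
          Real.log ((n : ℝ) ^ ((d : ℝ) / ℓ) / z)) =
          -Real.log ((n : ℝ) ^ ((d : ℝ) / ℓ) / z) by field_simp,
        Real.exp_neg, Real.exp_log (by positivity)]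
      rw [neg_div, Real.rpow_neg (by positivity : (0:ℝ) ≤ (n:ℝ))]
      field_simp
    have hle : Real.exp (-(2 * n / σ ^ 2) * Vhat xt) ≤ Real.exp (-(2 * n / σ ^ 2) * L) := by
      rw [hV xt, ← hA]; exact Iub
    have h1 := Real.exp_le_exp.mp hle
    have htpos : (0:ℝ) < 2 * n / σ ^ 2 := by positivity
    have h2 : (2 * (n:ℝ) / σ ^ 2) * L ≤ (2 * (n:ℝ) / σ ^ 2) * Vhat xt := by linarith
    exact le_of_mul_le_mul_left h2 htpos
  · -- upper bound on Vhat
    set U : ℝ := (2 ^ (ℓ - 1) * η / n) * S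
        + (σ ^ 2 / (2 * n)) * Real.log ((2 ^ (ℓ - 1) * (n : ℝ)) ^ ((d : ℝ) / ℓ) / z) with hU_def
    have hB : Real.exp (-(c * 2 ^ (ℓ - 1)) * S) * ((2 ^ (ℓ - 1) * (n : ℝ)) ^ (-(d : ℝ) / ℓ) * z)
        = Real.exp (-(2 * n / σ ^ 2) * U) := by
      rw [hU_def, mul_add, Real.exp_add]
      congr 1
      · congr 1
        rw [hc_def]
        field_simp
      · rw [show -(2 * (n : ℝ) / σ ^ 2) * ((σ ^ 2 / (2 * n)) *
            Real.log ((2 ^ (ℓ - 1) * (n : ℝ)) ^ ((d : ℝ) / ℓ) / z)) =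
            -Real.log ((2 ^ (ℓ - 1) * (n : ℝ)) ^ ((d : ℝ) / ℓ) / z) by field_simp,
          Real.exp_neg, Real.exp_log (by positivity)]
        rw [neg_div, Real.rpow_neg (by positivity : (0:ℝ) ≤ 2 ^ (ℓ - 1) * (n:ℝ))]
        field_simp
    have hle : Real.exp (-(2 * n / σ ^ 2) * U) ≤ Real.exp (-(2 * n / σ ^ 2) * Vhat xt) := by
      rw [hV xt, ← hB]; exact Ilb
    have h1 := Real.exp_le_exp.mp hle
    have htpos : (0:ℝ) < 2 * n / σ ^ 2 := by positivity
    have h2 : (2 * (n:ℝ) / σ ^ 2) * Vhat xt ≤ (2 * (n:ℝ) / σ ^ 2) * U := by linarith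
    exact le_of_mul_le_mul_left h2 htpos
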